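/- Let n ≥ 1 and 1 ≤ k ≤ n. In the ℚ-vector space of functions from the k-element subsets of {0,1,…,n} to ℚ, let L be the ℤ-submodule generated by the functions f_1,…,f_n together with t₀, where f_j(I) = |I ∩ {0,…,j−1}| − kj/(n+1) and t₀(I) = 1/binom(n+1,k). Then the set of functions in L that take integer values on every k-element subset is exactly the ℤ-submodule generated by the functions v_0,…,v_n, where v_i(I) = [i ∈ I] − [i ≤ k−2] (here [·] denotes 1 if the condition holds and 0 otherwise). (This is the combinatorial form of Proposition 3.3: {γ_0^∨,…,γ_n^∨} is an integral basis of the coweight lattice of G(ψ) = ψ(SL(V))·Z(GL(Λ^k V)).) -/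

import Mathlib

open Finset

private def intValSub (σ : Type*) : Submodule ℤ (σ → ℚ) where
  carrier := {g | ∀ I, ∃ m : ℤ, g I = (m : ℚ)}
  add_mem' := by
    intro a b ha hb I
    obtain ⟨x, hx⟩ := ha I
    obtain ⟨y, hy⟩ := hb I
    exact ⟨x + y, by simp [hx, hy]⟩
  zero_mem' := fun I => ⟨0, by simp⟩
  smul_mem' := by
    intro c a ha I
    obtain ⟨x, hx⟩ := ha I
    refine ⟨c * x, ?_⟩
    simp [Pi.smul_apply, hx, zsmul_eq_mul]

theorem integral_coweight_lattice_of_weighted_grassmannian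
    (n k : ℕ) (hn : 1 ≤ n) (hk1 : 1 ≤ k) (hkn : k ≤ n)
    (g : {I : Finset (Fin (n + 1)) // I.card = k} → ℚ) :
    (g ∈ Submodule.span ℤ
        (insert (fun _ : {I : Finset (Fin (n + 1)) // I.card = k} =>
            (1 : ℚ) / (Nat.choose (n + 1) k))
          (Set.range (fun (j : Fin n) (I : {I : Finset (Fin (n + 1)) // I.card = k}) =>
            (((I.1.filter (fun i : Fin (n + 1) => (i : ℕ) < (j : ℕ) + 1)).card : ℚ)
              - (k * ((j : ℕ) + 1)) / (n + 1)))))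
      ∧ (∀ I : {I : Finset (Fin (n + 1)) // I.card = k}, ∃ m : ℤ, g I = (m : ℚ)))
    ↔ g ∈ Submodule.span ℤ
        (Set.range (fun (i : Fin (n + 1)) (I : {I : Finset (Fin (n + 1)) // I.card = k}) =>
          ((if i ∈ I.1 then (1 : ℚ) else 0) - (if (i : ℕ) + 2 ≤ k then 1 else 0)))) := by
  classical
  set N := Nat.choose (n + 1) k with hNdef
  have hNpos : 0 < N := Nat.choose_pos (by omega)
  have hNQ : ((N : ℚ)) ≠ 0 := by exact_mod_cast hNpos.ne'
  have hn1 : ((n : ℚ) + 1) ≠ 0 := by positivity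
  -- binomial identity: (n+1) * C(n, k-1) = k * C(n+1, k)
  have hbin : ((n : ℚ) + 1) * (Nat.choose n (k - 1)) = (k : ℚ) * N := by
    have h := Nat.add_one_mul_choose_eq n (k - 1)
    have hk : k - 1 + 1 = k := by omega
    rw [hk,
      Nat.mul_comm (Nat.choose (n + 1) k) k] at h
    exact_mod_cast h
  set t0 : {I : Finset (Fin (n + 1)) // I.card = k} → ℚ :=
    fun _ : {I : Finset (Fin (n + 1)) // I.card = k} => (1 : ℚ) / (N : ℚ) with ht0def
  set f : Fin n → {I : Finset (Fin (n + 1)) // I.card = k} → ℚ :=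
    fun (j : Fin n) (I : {I : Finset (Fin (n + 1)) // I.card = k}) =>
      (((I.1.filter (fun i : Fin (n + 1) => (i : ℕ) < (j : ℕ) + 1)).card : ℚ)
        - (k * ((j : ℕ) + 1)) / (n + 1)) with hfdef
  set v : Fin (n + 1) → {I : Finset (Fin (n + 1)) // I.card = k} → ℚ :=
    fun (i : Fin (n + 1)) (I : {I : Finset (Fin (n + 1)) // I.card = k}) =>
      ((if i ∈ I.1 then (1 : ℚ) else 0) - (if (i : ℕ) + 2 ≤ k then 1 else 0)) with hvdef
  set L := Submodule.span ℤ (insert t0 (Set.range f)) with hLdef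
  set M := Submodule.span ℤ (Set.range v) with hMdef
  -- auxiliary functions
  set F : ℕ → {I : Finset (Fin (n + 1)) // I.card = k} → ℚ := fun m I =>
    ((I.1.filter (fun i : Fin (n + 1) => (i : ℕ) < m)).card : ℚ) - (k * m) / (n + 1) with hFdef
  set e : Fin (n + 1) → {I : Finset (Fin (n + 1)) // I.card = k} → ℚ := fun i I =>
    (if i ∈ I.1 then (1 : ℚ) else 0) - (k : ℚ) / ((n : ℚ) + 1) with hedef
  have hcard : ∀ (i : Fin (n + 1)) (I : Finset (Fin (n + 1))),
      (I.filter (fun x : Fin (n + 1) => (x : ℕ) < (i : ℕ) + 1)).card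
        = (I.filter (fun x : Fin (n + 1) => (x : ℕ) < (i : ℕ))).card
          + (if i ∈ I then 1 else 0) := by
    intro i I
    have hiff : I.filter (fun x : Fin (n + 1) => (x : ℕ) < (i : ℕ) + 1)
        = I.filter (fun x : Fin (n + 1) => (x : ℕ) < (i : ℕ) ∨ x = i) := by
      apply Finset.filter_congr
      intro x _
      constructor
      · intro h
        rcases Nat.lt_succ_iff_lt_or_eq.mp h with h | h
        · exact Or.inl h
        · exact Or.inr (Fin.ext h)
      · rintro (h | rfl)
        · omega
        · omega
    rw [hiff, Finset.filter_or]
    have hdisj : Disjoint (I.filter fun x : Fin (n + 1) => (x : ℕ) < (i : ℕ))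
        (I.filter fun x : Fin (n + 1) => x = i) := by
      rw [Finset.disjoint_left]
      intro a ha hb
      simp only [Finset.mem_filter] at ha hb
      rcases hb with ⟨-, rfl⟩
      exact absurd ha.2 (lt_irrefl _)
    rw [Finset.card_union_of_disjoint hdisj, Finset.filter_eq']
    split_ifs <;> simp
  have hFe : ∀ i : Fin (n + 1), F ((i : ℕ) + 1) - F (i : ℕ) = e i := by
    intro i
    funext I
    simp only [hFdef, hedef, Pi.sub_apply]
    rw [hcard i I.1]
    push_cast
    split_ifs <;> ring
  have hF0 : F 0 = 0 := by
    funext I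
    simp [hFdef]
  have hFtop : F (n + 1) = 0 := by
    funext I
    simp only [hFdef]
    have hfil : I.1.filter (fun x : Fin (n + 1) => (x : ℕ) < n + 1) = I.1 :=
      Finset.filter_true_of_mem (fun x _ => x.isLt)
    rw [hfil, I.2]
    push_cast
    field_simp
    simp
  have hfF : ∀ j : Fin n, f j = F ((j : ℕ) + 1) := by
    intro j
    funext I
    simp only [hfdef, hFdef]
    push_cast
    ring
  have hFL : ∀ m : ℕ, m ≤ n + 1 → F m ∈ L := by
    intro m hm
    rcases Nat.eq_zero_or_pos m with rfl | hm0
    · rw [hF0]; exact zero_mem _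
    rcases eq_or_lt_of_le hm with rfl | hmlt
    · rw [hFtop]; exact zero_mem _
    obtain ⟨j, rfl⟩ : ∃ j, m = j + 1 := ⟨m - 1, by omega⟩
    have hj : j < n := by omega
    have hmem : f ⟨j, hj⟩ ∈ L :=
      Submodule.subset_span (Set.mem_insert_iff.mpr (Or.inr ⟨⟨j, hj⟩, rfl⟩))
    rw [hfF ⟨j, hj⟩] at hmem
    exact hmem
  have ht0L : t0 ∈ L := Submodule.subset_span (Set.mem_insert _ _)
  -- v i = e i + c i • t0
  have hvt : ∀ i : Fin (n + 1), v i = e i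
      + (((Nat.choose n (k - 1) : ℤ)) - (if (i : ℕ) + 2 ≤ k then (N : ℤ) else 0)) • t0 := by
    intro i
    funext I
    simp only [hvdef, hedef, ht0def, Pi.add_apply, Pi.smul_apply, zsmul_eq_mul]
    simp only [Pi.mul_apply, Pi.sub_apply, Pi.natCast_apply, Pi.intCast_apply]
    push_cast
    split_ifs with h1 h2 <;>
    · field_simp
      linarith [hbin]
  have heL : ∀ i : Fin (n + 1), e i ∈ L := by
    intro i
    have h1 := hFL ((i : ℕ) + 1) (by omega)
    have h2 := hFL (i : ℕ) (by omega)
    have h3 := sub_mem h1 h2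
    rwa [hFe i] at h3
  have hvL : ∀ i : Fin (n + 1), v i ∈ L := by
    intro i
    rw [hvt i]
    exact add_mem (heL i) (Submodule.smul_mem _ _ ht0L)
  have hML : M ≤ L := by
    rw [hMdef, Submodule.span_le]
    rintro x ⟨i, rfl⟩
    exact hvL i
  have hMint : M ≤ intValSub {I : Finset (Fin (n + 1)) // I.card = k} := by
    rw [hMdef, Submodule.span_le]
    rintro x ⟨i, rfl⟩
    intro I
    by_cases h1 : i ∈ I.1 <;> by_cases h2 : (i : ℕ) + 2 ≤ k
    · exact ⟨0, by simp [hvdef, h1, h2]⟩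
    · exact ⟨1, by simp [hvdef, h1, h2]⟩
    · exact ⟨-1, by simp [hvdef, h1, h2]⟩
    · exact ⟨0, by simp [hvdef, h1, h2]⟩
  -- the constant function 1 is the sum of the v i
  have hsumv : (∑ i : Fin (n + 1), v i)
      = (fun _ : {I : Finset (Fin (n + 1)) // I.card = k} => (1 : ℚ)) := by
    funext I
    rw [Finset.sum_apply]
    simp only [hvdef]
    rw [Finset.sum_sub_distrib]
    have h1 : (∑ i : Fin (n + 1), if i ∈ I.1 then (1 : ℚ) else 0) = (k : ℚ) := by
      rw [Finset.sum_ite_mem, Finset.univ_inter, Finset.sum_const, I.2]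
      simp
    have h2 : (∑ i : Fin (n + 1), if (i : ℕ) + 2 ≤ k then (1 : ℚ) else 0) = (k : ℚ) - 1 := by
      rw [Fin.sum_univ_eq_sum_range (fun i => if i + 2 ≤ k then (1 : ℚ) else 0)]
      rw [Finset.sum_boole]
      have hfil : (Finset.range (n + 1)).filter (fun i => i + 2 ≤ k) = Finset.range (k - 1) := by
        ext i
        simp only [Finset.mem_filter, Finset.mem_range]
        omega
      rw [hfil, Finset.card_range]
      have : ((k - 1 : ℕ) : ℚ) = (k : ℚ) - 1 := by
        push_cast [Nat.cast_sub hk1]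
        ring
      simpa using this
    rw [h1, h2]
    ring
  have hone_mem : (fun _ : {I : Finset (Fin (n + 1)) // I.card = k} => (1 : ℚ)) ∈ M := by
    rw [← hsumv]
    exact Submodule.sum_mem _ (fun i _ => Submodule.subset_span ⟨i, rfl⟩)
  -- L ≤ M ⊔ ℤ • t0
  have ht0sup : t0 ∈ M ⊔ Submodule.span ℤ {t0} :=
    Submodule.mem_sup_right (Submodule.mem_span_singleton_self t0)
  have he_sup : ∀ i : Fin (n + 1), e i ∈ M ⊔ Submodule.span ℤ {t0} := by
    intro i
    have hv_mem : v i ∈ M ⊔ Submodule.span ℤ {t0} :=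
      Submodule.mem_sup_left (Submodule.subset_span ⟨i, rfl⟩)
    have : e i = v i
        - (((Nat.choose n (k - 1) : ℤ)) - (if (i : ℕ) + 2 ≤ k then (N : ℤ) else 0)) • t0 := by
      rw [hvt i]; abel
    rw [this]
    exact sub_mem hv_mem (Submodule.smul_mem _ _ ht0sup)
  have hLsup : L ≤ M ⊔ Submodule.span ℤ {t0} := by
    rw [hLdef, Submodule.span_le]
    rintro x hx
    rcases Set.mem_insert_iff.mp hx with rfl | ⟨j, rfl⟩
    · exact ht0sup
    · rw [hfF j]
      have htel : F ((j : ℕ) + 1) = ∑ i ∈ Finset.range ((j : ℕ) + 1), (F (i + 1) - F i) := by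
        rw [Finset.sum_range_sub F ((j : ℕ) + 1), hF0, sub_zero]
      rw [htel]
      apply Submodule.sum_mem
      intro i hi
      have hi' : i < n + 1 := by
        have := j.2
        simp only [Finset.mem_range] at hi
        omega
      have h := he_sup ⟨i, hi'⟩
      rw [← hFe ⟨i, hi'⟩] at h
      exact h
  constructor
  · rintro ⟨hgL, hgint⟩
    have hg' := hLsup hgL
    rw [Submodule.mem_sup] at hg'
    obtain ⟨y, hy, z, hz, hyz⟩ := hg'
    rw [Submodule.mem_span_singleton] at hz
    obtain ⟨a, rfl⟩ := hz
    obtain ⟨I0, -, hI0⟩ := Finset.exists_subset_card_eq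
      (s := (Finset.univ : Finset (Fin (n + 1)))) (n := k) (by simp [Finset.card_univ]; omega)
    set J : {I : Finset (Fin (n + 1)) // I.card = k} := ⟨I0, hI0⟩ with hJdef
    obtain ⟨mg, hmg⟩ := hgint J
    obtain ⟨my, hmy⟩ := hMint hy J
    have happ : y J + (a : ℚ) * (1 / (N : ℚ)) = g J := by
      have := congrArg (fun h => h J) hyz
      simpa [Pi.add_apply, Pi.smul_apply, zsmul_eq_mul, ht0def] using this
    have hval : (a : ℚ) * (1 / (N : ℚ)) = ((mg - my : ℤ) : ℚ) := by
      push_cast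
      rw [← hmg, ← hmy]
      linarith [happ]
    have hsmul : a • t0 = ((mg - my : ℤ)) • (fun _ : {I : Finset (Fin (n + 1)) // I.card = k} => (1 : ℚ)) := by
      funext I
      simp only [Pi.smul_apply, zsmul_eq_mul, ht0def, mul_one]
      rw [hval]
    rw [← hyz, hsmul]
    exact add_mem hy (Submodule.smul_mem _ _ hone_mem)
  · intro hgM
    exact ⟨hML hgM, fun I => hMint hgM I⟩
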